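/- Consider the two-node interaction system with action spaces A_1 = A_2 = {x, y}, where node 2's reaction function is historyless and always outputs node 1's most recent action, and node 1's reaction function at each time t outputs y if at some point in the history of interaction node 2's action changed from x to y (i.e., there exist two consecutive profiles in the history at which node 2's action was x and then y), and outputs x otherwise. Then this system is convergent: for every initial history and every fair schedule the dynamics is eventually constant, and it converges to one of the two stable states (x,x) or (y,y). -/
import Mathlib


/-- A schedule `σ` is fair if every node is activated infinitely often. -/
def Fair {n : ℕ} (σ : ℕ → Finset (Fin n)) : Prop :=
  ∀ i : Fin n, ∀ N : ℕ, ∃ t, N ≤ t ∧ i ∈ σ t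

/-- A schedule is `r`-fair if every node is activated at least once in every
`r` consecutive time steps. -/
def RFair {n : ℕ} (r : ℕ) (σ : ℕ → Finset (Fin n)) : Prop :=
  ∀ i : Fin n, ∀ t0 : ℕ, ∃ t, t0 ≤ t ∧ t < t0 + r ∧ i ∈ σ t

/-- A (deterministic, historyless) reaction function is self-independent if
it does not depend on node `i`'s own action. -/
def SelfIndependent {n : ℕ} {A : Fin n → Type*} (i : Fin n)
    (g : (∀ j, A j) → A i) : Prop :=
  ∀ a b : ∀ j, A j, (∀ j, j ≠ i → a j = b j) → g a = g b

/-- A stable state is a fixed point of all reaction functions. -/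
def Stable {n : ℕ} {A : Fin n → Type*}
    (g : ∀ i : Fin n, (∀ j, A j) → A i) (a : ∀ j, A j) : Prop :=
  ∀ i, g i a = a i

/-- The `(s0, σ)`-dynamics of a system of deterministic historyless reaction
functions: at each time step, each activated node reacts to the current
profile and the other nodes repeat their previous action. -/
def dynamics {n : ℕ} {A : Fin n → Type*}
    (g : ∀ i : Fin n, (∀ j, A j) → A i) (s0 : ∀ j, A j)
    (σ : ℕ → Finset (Fin n)) : ℕ → ∀ j, A j
  | 0 => s0
  | t + 1 => fun i =>
      if i ∈ σ (t + 1) then g i (dynamics g s0 σ t) else dynamics g s0 σ t i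

/-- A sequence converges if it is eventually constant. -/
def EventuallyConstant {α : Type*} (s : ℕ → α) : Prop :=
  ∃ t0 : ℕ, ∀ t, t0 ≤ t → s t = s t0

/-- The system is convergent if the dynamics converges for every initial
profile and every fair schedule. -/
def Convergent {n : ℕ} {A : Fin n → Type*}
    (g : ∀ i : Fin n, (∀ j, A j) → A i) : Prop :=
  ∀ (s0 : ∀ j, A j) (σ : ℕ → Finset (Fin n)),
    (∀ t, (σ t).Nonempty) → Fair σ → EventuallyConstant (dynamics g s0 σ)

/-- The system is `r`-convergent if the dynamics converges for every initial
profile and every `r`-fair schedule. -/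
def RConvergent {n : ℕ} {A : Fin n → Type*} (r : ℕ)
    (g : ∀ i : Fin n, (∀ j, A j) → A i) : Prop :=
  ∀ (s0 : ∀ j, A j) (σ : ℕ → Finset (Fin n)),
    (∀ t, (σ t).Nonempty) → RFair r σ → EventuallyConstant (dynamics g s0 σ)

/-- The two actions `x` and `y`. -/
inductive XY : Type
  | x : XY
  | y : XY
deriving DecidableEq

/-- The two-node system in which node 2 (index 1) always
copies node 1's most recent action, and node 1 (index 0) chooses `y` iff node
2's action changed from `x` to `y` at some point in the history, is
convergent, and it converges to `(x,x)` or `(y,y)`.  Here `s 0, …, s (w-1)`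
is the initial history and at every time step `t ≥ w` each activated node
reacts to the entire history `s 0, …, s (t-1)` while the other node repeats
its previous action. -/
theorem unbounded_recall_system_convergent
    (w : ℕ) (hw : 1 ≤ w) (s : ℕ → Fin 2 → XY)
    (σ : ℕ → Finset (Fin 2)) (hσ : ∀ t, (σ t).Nonempty) (hfair : Fair σ)
    (hdyn : ∀ t : ℕ, w ≤ t →
      ((1 : Fin 2) ∈ σ t → s t 1 = s (t - 1) 0) ∧
      ((1 : Fin 2) ∉ σ t → s t 1 = s (t - 1) 1) ∧
      ((0 : Fin 2) ∈ σ t →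
        ((∃ u : ℕ, u + 1 < t ∧ s u 1 = XY.x ∧ s (u + 1) 1 = XY.y) →
            s t 0 = XY.y) ∧
        (¬ (∃ u : ℕ, u + 1 < t ∧ s u 1 = XY.x ∧ s (u + 1) 1 = XY.y) →
            s t 0 = XY.x)) ∧
      ((0 : Fin 2) ∉ σ t → s t 0 = s (t - 1) 0)) :
    ∃ t0 : ℕ, (∀ t, t0 ≤ t → s t = s t0) ∧
      ((s t0 = fun _ => XY.x) ∨ (s t0 = fun _ => XY.y)) := by
  by_cases h : ∃ u : ℕ, s u 1 = XY.x ∧ s (u + 1) 1 = XY.y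
  · obtain ⟨u, hux, huy⟩ := h
    obtain ⟨t1, ht1, hσ1⟩ := hfair 0 (max w (u + 2))
    have ht1w : w ≤ t1 := le_trans (le_max_left _ _) ht1
    have ht1u : u + 2 ≤ t1 := le_trans (le_max_right _ _) ht1
    have h0 : ∀ t, t1 ≤ t → s t 0 = XY.y := by
      intro t ht
      induction t, ht using Nat.le_induction with
      | base =>
        exact ((hdyn t1 ht1w).2.2.1 hσ1).1 ⟨u, by omega, hux, huy⟩
      | succ t ht ih =>
        have hw' : w ≤ t + 1 := by omega
        by_cases hc : (0 : Fin 2) ∈ σ (t + 1)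
        · exact ((hdyn (t + 1) hw').2.2.1 hc).1 ⟨u, by omega, hux, huy⟩
        · have h2 := (hdyn (t + 1) hw').2.2.2 hc
          simpa using h2.trans ih
    obtain ⟨t2, ht2, hσ2⟩ := hfair 1 (t1 + 1)
    have h1 : ∀ t, t2 ≤ t → s t 1 = XY.y := by
      intro t ht
      induction t, ht using Nat.le_induction with
      | base =>
        have hw' : w ≤ t2 := by omega
        rw [(hdyn t2 hw').1 hσ2]
        exact h0 (t2 - 1) (by omega)
      | succ t ht ih =>
        have hw' : w ≤ t + 1 := by omega
        by_cases hc : (1 : Fin 2) ∈ σ (t + 1)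
        · have h2 := (hdyn (t + 1) hw').1 hc
          simp only [Nat.add_sub_cancel] at h2
          rw [h2]; exact h0 t (by omega)
        · have h2 := (hdyn (t + 1) hw').2.1 hc
          simpa using h2.trans ih
    refine ⟨t2, ?_, Or.inr ?_⟩
    · intro t ht
      funext i
      fin_cases i
      · show s t 0 = s t2 0
        rw [h0 t (by omega), h0 t2 (by omega)]
      · show s t 1 = s t2 1
        rw [h1 t ht, h1 t2 le_rfl]
    · funext i; fin_cases i
      · exact h0 t2 (by omega)
      · exact h1 t2 le_rfl
  · push_neg at h
    have hnp : ∀ t, ¬ ∃ u : ℕ, u + 1 < t ∧ s u 1 = XY.x ∧ s (u + 1) 1 = XY.y := by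
      rintro t ⟨u, _, hx, hy⟩
      exact h u hx hy
    obtain ⟨t1, ht1, hσ1⟩ := hfair 0 w
    have h0 : ∀ t, t1 ≤ t → s t 0 = XY.x := by
      intro t ht
      induction t, ht using Nat.le_induction with
      | base =>
        exact ((hdyn t1 ht1).2.2.1 hσ1).2 (hnp t1)
      | succ t ht ih =>
        have hw' : w ≤ t + 1 := by omega
        by_cases hc : (0 : Fin 2) ∈ σ (t + 1)
        · exact ((hdyn (t + 1) hw').2.2.1 hc).2 (hnp (t + 1))
        · have h2 := (hdyn (t + 1) hw').2.2.2 hc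
          simpa using h2.trans ih
    obtain ⟨t2, ht2, hσ2⟩ := hfair 1 (t1 + 1)
    have h1 : ∀ t, t2 ≤ t → s t 1 = XY.x := by
      intro t ht
      induction t, ht using Nat.le_induction with
      | base =>
        have hw' : w ≤ t2 := by omega
        rw [(hdyn t2 hw').1 hσ2]
        exact h0 (t2 - 1) (by omega)
      | succ t ht ih =>
        have hw' : w ≤ t + 1 := by omega
        by_cases hc : (1 : Fin 2) ∈ σ (t + 1)
        · have h2 := (hdyn (t + 1) hw').1 hc
          simp only [Nat.add_sub_cancel] at h2
          rw [h2]; exact h0 t (by omega)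
        · have h2 := (hdyn (t + 1) hw').2.1 hc
          simpa using h2.trans ih
    refine ⟨t2, ?_, Or.inl ?_⟩
    · intro t ht
      funext i
      fin_cases i
      · show s t 0 = s t2 0
        rw [h0 t (by omega), h0 t2 (by omega)]
      · show s t 1 = s t2 1
        rw [h1 t ht, h1 t2 le_rfl]
    · funext i; fin_cases i
      · exact h0 t2 (by omega)
      · exact h1 t2 le_rfl
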